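/- Let A be a positive operator on H, let 𝔸 = A ⊕ ⋯ ⊕ A (d copies) on H^d, and let 𝕋 = (T_{ij}) be a d×d operator matrix with each T_{ij} A-bounded. Then 𝕋 is 𝔸-bounded and ‖𝕋‖_𝔸 ≤ ‖(‖T_{ij}‖_A)_{d×d}‖, the operator norm of the d×d nonnegative real matrix of A-seminorms. -/

import Mathlib

open ContinuousLinearMap

variable {H : Type*} [NormedAddCommGroup H] [InnerProductSpace ℂ H] [CompleteSpace H]

/-- The seminorm `‖x‖_A = ‖A^{1/2} x‖ = √⟨Ax, x⟩` induced by a positive operator `A`. -/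
noncomputable def anorm (A : H →L[ℂ] H) (x : H) : ℝ :=
  Real.sqrt (A.reApplyInnerSelf x)

/-- `T` is `A`-bounded: `‖Tx‖_A ≤ c ‖x‖_A` for some `c > 0`. -/
def ABounded (A T : H →L[ℂ] H) : Prop :=
  ∃ c : ℝ, 0 < c ∧ ∀ x : H, anorm A (T x) ≤ c * anorm A x

/-- The operator seminorm `‖T‖_A`: the least `c ≥ 0` with `‖Tx‖_A ≤ c ‖x‖_A` for all `x`. -/
noncomputable def aNorm (A T : H →L[ℂ] H) : ℝ :=
  sInf {c : ℝ | 0 ≤ c ∧ ∀ x : H, anorm A (T x) ≤ c * anorm A x}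

/-- The `A`-spectral radius `r_A(T) = inf_{n ≥ 1} ‖T^n‖_A^{1/n}`. -/
noncomputable def aSpecRad (A T : H →L[ℂ] H) : ℝ :=
  ⨅ n : ℕ+, aNorm A (T ^ (n : ℕ)) ^ ((n : ℝ)⁻¹)

/-- The `A`-numerical radius `ω_A(T) = sup {|⟨ATx, x⟩| : ‖x‖_A = 1}`. -/
noncomputable def aNumRad (A T : H →L[ℂ] H) : ℝ :=
  sSup {c : ℝ | ∃ x : H, anorm A x = 1 ∧ c = ‖(inner ℂ (A (T x)) x : ℂ)‖}

/-- The operator on `H^d` (with the `ℓ²` product structure) given by a `d × d`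
matrix of operators: `(matOp T) x i = ∑ j, T i j (x j)`. -/
noncomputable def matOp {d : ℕ} (T : Fin d → Fin d → (H →L[ℂ] H)) :
    PiLp 2 (fun _ : Fin d => H) →L[ℂ] PiLp 2 (fun _ : Fin d => H) :=
  (((PiLp.continuousLinearEquiv 2 ℂ (fun _ : Fin d => H)).symm :
      (∀ _ : Fin d, H) →L[ℂ] PiLp 2 (fun _ : Fin d => H))) ∘L
    (ContinuousLinearMap.pi fun i => ∑ j, (T i j) ∘L
      ((ContinuousLinearMap.proj j) ∘L
        ((PiLp.continuousLinearEquiv 2 ℂ (fun _ : Fin d => H)) :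
          PiLp 2 (fun _ : Fin d => H) →L[ℂ] (∀ _ : Fin d, H))))

set_option linter.unusedSectionVars false

lemma anorm_eq_sqrt_apply (A : H →L[ℂ] H) (hA : A.IsPositive) (x : H) :
    anorm A x = ‖CFC.sqrt A x‖ := by
  have h0 : 0 ≤ A := (ContinuousLinearMap.nonneg_iff_isPositive A).2 hA
  have hs : CFC.sqrt A * CFC.sqrt A = A := CFC.sqrt_mul_sqrt_self A h0
  have hsa : IsSelfAdjoint (CFC.sqrt A) :=
    ((ContinuousLinearMap.nonneg_iff_isPositive _).1 (CFC.sqrt_nonneg A)).isSelfAdjoint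
  have hadj : ContinuousLinearMap.adjoint (CFC.sqrt A) = CFC.sqrt A := hsa
  have key : (inner ℂ (A x) x : ℂ) = inner ℂ (CFC.sqrt A x) (CFC.sqrt A x) := by
    conv_lhs => rw [← hs, ContinuousLinearMap.mul_apply, ← hadj,
      ContinuousLinearMap.adjoint_inner_left]
    rw [hadj]
  have h2 : A.reApplyInnerSelf x = ‖CFC.sqrt A x‖ ^ 2 := by
    rw [ContinuousLinearMap.reApplyInnerSelf_apply, key, inner_self_eq_norm_sq]
  rw [anorm, h2, Real.sqrt_sq (norm_nonneg _)]

omit [CompleteSpace H] in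
lemma anorm_nonneg (A : H →L[ℂ] H) (x : H) : 0 ≤ anorm A x := Real.sqrt_nonneg _

lemma aNorm_nonneg (A T : H →L[ℂ] H) (hT : ABounded A T) : 0 ≤ aNorm A T := by
  obtain ⟨c, hc, h⟩ := hT
  exact le_csInf ⟨c, hc.le, h⟩ fun b hb => hb.1

lemma aNorm_bound (A T : H →L[ℂ] H) (hT : ABounded A T) (x : H) :
    anorm A (T x) ≤ aNorm A T * anorm A x := by
  obtain ⟨c, hc, h⟩ := hT
  have hne : Set.Nonempty {c : ℝ | 0 ≤ c ∧ ∀ x : H, anorm A (T x) ≤ c * anorm A x} :=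
    ⟨c, hc.le, h⟩
  rcases eq_or_lt_of_le (anorm_nonneg A x) with h0 | h0
  · have h1 : anorm A (T x) ≤ 0 := by
      have := h x; rw [← h0] at this; simpa using this
    calc anorm A (T x) ≤ 0 := h1
    _ ≤ aNorm A T * anorm A x := by rw [← h0, mul_zero]
  · rw [← div_le_iff₀ h0]
    exact le_csInf hne fun b hb => by rw [div_le_iff₀ h0]; exact hb.2 x

lemma matOp_apply {d : ℕ} (T : Fin d → Fin d → (H →L[ℂ] H))
    (x : PiLp 2 (fun _ : Fin d => H)) (i : Fin d) :
    matOp T x i = ∑ j, T i j (x j) := by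
  simp [matOp]

lemma anorm_matOp_diag {d : ℕ} (A : H →L[ℂ] H) (hA : A.IsPositive)
    (x : PiLp 2 (fun _ : Fin d => H)) :
    anorm (matOp fun i j => if i = j then A else 0) x =
      Real.sqrt (∑ i, (anorm A (x i)) ^ 2) := by
  have happ : ∀ i, (matOp fun i j => if i = j then A else 0) x i = A (x i) := by
    intro i
    rw [matOp_apply]
    rw [Finset.sum_eq_single i]
    · simp
    · intro b _ hb; simp [Ne.symm hb]
    · intro h; exact absurd (Finset.mem_univ i) h
  rw [anorm, ContinuousLinearMap.reApplyInnerSelf_apply]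
  congr 1
  rw [PiLp.inner_apply]
  have h2 : ∀ i : Fin d, (anorm A (x i)) ^ 2 = A.reApplyInnerSelf (x i) := by
    intro i
    rw [anorm, Real.sq_sqrt (hA.2 (x i))]
  simp_rw [h2, happ]
  rw [map_sum]
  rfl

lemma main_ineq {d : ℕ} (A : H →L[ℂ] H) (hA : A.IsPositive)
    (T : Fin d → Fin d → (H →L[ℂ] H)) (hT : ∀ i j, ABounded A (T i j))
    (x : PiLp 2 (fun _ : Fin d => H)) :
    anorm (matOp fun i j => if i = j then A else 0) (matOp T x) ≤
      ‖Matrix.toEuclideanCLM (𝕜 := ℝ) (Matrix.of fun i j => aNorm A (T i j))‖ *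
        anorm (matOp fun i j => if i = j then A else 0) x := by
  set M : Matrix (Fin d) (Fin d) ℝ := Matrix.of fun i j => aNorm A (T i j) with hM
  set v : EuclideanSpace ℝ (Fin d) := (WithLp.equiv 2 _).symm (fun j => anorm A (x j)) with hv
  set w : EuclideanSpace ℝ (Fin d) := Matrix.toEuclideanCLM (𝕜 := ℝ) M v with hw
  have hwj : ∀ i, w i = ∑ j, aNorm A (T i j) * anorm A (x j) := by
    intro i
    rw [hw, hv, WithLp.equiv_symm_apply, Matrix.toEuclideanCLM_toLp]
    simp [Matrix.toLin'_apply, Matrix.mulVec, dotProduct, hM]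
  have hstep : ∀ i, anorm A (matOp T x i) ≤ w i := by
    intro i
    rw [matOp_apply, hwj]
    calc anorm A (∑ j, T i j (x j)) = ‖CFC.sqrt A (∑ j, T i j (x j))‖ :=
          anorm_eq_sqrt_apply A hA _
    _ = ‖∑ j, CFC.sqrt A (T i j (x j))‖ := by rw [map_sum]
    _ ≤ ∑ j, ‖CFC.sqrt A (T i j (x j))‖ := norm_sum_le _ _
    _ = ∑ j, anorm A (T i j (x j)) := by
        exact Finset.sum_congr rfl fun j _ => (anorm_eq_sqrt_apply A hA _).symm
    _ ≤ ∑ j, aNorm A (T i j) * anorm A (x j) :=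
        Finset.sum_le_sum fun j _ => aNorm_bound A (T i j) (hT i j) (x j)
  have hnormw : ‖w‖ = Real.sqrt (∑ i, (w i) ^ 2) := by
    rw [EuclideanSpace.norm_eq]
    congr 1
    exact Finset.sum_congr rfl fun i _ => by rw [Real.norm_eq_abs, sq_abs]
  have hnormv : ‖v‖ = anorm (matOp fun i j => if i = j then A else 0) x := by
    rw [EuclideanSpace.norm_eq, anorm_matOp_diag A hA]
    congr 1
    exact Finset.sum_congr rfl fun i _ => by rw [Real.norm_eq_abs, sq_abs]; rfl
  calc anorm (matOp fun i j => if i = j then A else 0) (matOp T x)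
      = Real.sqrt (∑ i, (anorm A (matOp T x i)) ^ 2) := anorm_matOp_diag A hA _
    _ ≤ Real.sqrt (∑ i, (w i) ^ 2) := by
        apply Real.sqrt_le_sqrt
        exact Finset.sum_le_sum fun i _ =>
          pow_le_pow_left₀ (anorm_nonneg A _) (hstep i) 2
    _ = ‖w‖ := hnormw.symm
    _ ≤ ‖Matrix.toEuclideanCLM (𝕜 := ℝ) M‖ * ‖v‖ :=
        (Matrix.toEuclideanCLM (𝕜 := ℝ) M).le_opNorm v
    _ = _ := by rw [hnormv]

set_option maxHeartbeats 1000000 in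
set_option synthInstance.maxHeartbeats 100000 in
/-- a `d × d` matrix `𝕋 = (T_{ij})` of `A`-bounded operators is
`𝔸 = diag(A,…,A)`-bounded on `H^d`, and `‖𝕋‖_𝔸` is at most the (ℓ²→ℓ²) operator norm
of the nonnegative real matrix `(‖T_{ij}‖_A)`. -/
theorem stmt7 {d : ℕ} (A : H →L[ℂ] H) (hA : A.IsPositive)
    (T : Fin d → Fin d → (H →L[ℂ] H)) (hT : ∀ i j, ABounded A (T i j)) :
    ABounded (matOp fun i j => if i = j then A else 0) (matOp T) ∧
      aNorm (matOp fun i j => if i = j then A else 0) (matOp T) ≤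
        ‖Matrix.toEuclideanCLM (𝕜 := ℝ) (Matrix.of fun i j => aNorm A (T i j))‖ := by
  set M : Matrix (Fin d) (Fin d) ℝ := Matrix.of fun i j => aNorm A (T i j) with hM
  constructor
  · refine ⟨‖Matrix.toEuclideanCLM (𝕜 := ℝ) M‖ + 1, by positivity, fun x => ?_⟩
    have h1 := main_ineq A hA T hT x
    have h2 : 0 ≤ anorm (matOp fun i j => if i = j then A else 0) x := anorm_nonneg _ _
    nlinarith
  · exact csInf_le ⟨0, fun b hb => hb.1⟩ ⟨norm_nonneg _, main_ineq A hA T hT⟩
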